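/- Let λ ∈ ℂ be given and suppose (μ, y) ∈ ℂ × ℂᵐ satisfies B(λ,μ)y = 0 with y normalized as cᵀy = 1. If the Jacobian matrix J(λ,μ,y) is invertible, then there exist functions g : ℂ → ℂ and Y : ℂ → ℂᵐ, both analytic at λ, such that g(λ) = μ, Y(λ) = y, and for all s in some neighborhood of λ one has B(s, g(s)) Y(s) = (B₁ + s B₂ + g(s) B₃) Y(s) = 0 and cᵀ Y(s) = 1. -/

import Mathlib

open Matrix

section Aux

variable (m : ℕ) (B₁ B₂ B₃ : Matrix (Fin m) (Fin m) ℂ) (c : Fin m → ℂ)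

/-- The nonlinear map `Φ(s,t,Y) = (s, B(s,t)Y, cᵀY)` (in expanded form). -/
noncomputable def nlPhi : (ℂ × ℂ × (Fin m → ℂ)) → (ℂ × (Fin m → ℂ) × ℂ) :=
  fun p => (p.1, B₁ *ᵥ p.2.2 + p.1 • (B₂ *ᵥ p.2.2) + p.2.1 • (B₃ *ᵥ p.2.2), c ⬝ᵥ p.2.2)

end Aux

/-- **Existence of implicit functions.**
Let `λ ∈ ℂ` be given and suppose `(μ, y)` satisfies `B(λ,μ)y = 0` with `y` normalized as
`cᵀy = 1`.  If the Jacobian `J(λ,μ,y) = [[B(λ,μ), B₃y],[cᵀ, 0]]` is invertible, then there exist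
functions `g : ℂ → ℂ` and `Y : ℂ → ℂᵐ`, analytic at `λ`, with `g(λ) = μ`, `Y(λ) = y`, and
`B(s, g(s)) Y(s) = 0`, `cᵀ Y(s) = 1` for all `s` in a neighborhood of `λ`. -/
theorem nonlinearization_existence
    (m : ℕ) (B₁ B₂ B₃ : Matrix (Fin m) (Fin m) ℂ) (c : Fin m → ℂ)
    (lam μ : ℂ) (y : Fin m → ℂ)
    (hB : (B₁ + lam • B₂ + μ • B₃) *ᵥ y = 0)
    (hc : c ⬝ᵥ y = 1)
    (hJ : IsUnit (Matrix.fromBlocks (B₁ + lam • B₂ + μ • B₃)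
        (Matrix.replicateCol (Fin 1) (B₃ *ᵥ y)) (Matrix.replicateRow (Fin 1) c) 0)) :
    ∃ (g : ℂ → ℂ) (Y : ℂ → (Fin m → ℂ)),
      AnalyticAt ℂ g lam ∧ AnalyticAt ℂ Y lam ∧
      g lam = μ ∧ Y lam = y ∧
      ∀ᶠ s in nhds lam,
        (B₁ + s • B₂ + g s • B₃) *ᵥ (Y s) = 0 ∧ c ⬝ᵥ (Y s) = 1 := by
  classical
  set A : Matrix (Fin m) (Fin m) ℂ := B₁ + lam • B₂ + μ • B₃ with hAdef
  set bv : Fin m → ℂ := B₃ *ᵥ y with hbv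
  set w2 : Fin m → ℂ := B₂ *ᵥ y with hw2
  set J : Matrix (Fin m ⊕ Fin 1) (Fin m ⊕ Fin 1) ℂ :=
    Matrix.fromBlocks A (Matrix.replicateCol (Fin 1) bv) (Matrix.replicateRow (Fin 1) c) 0 with hJdef
  have hdet : IsUnit J.det := (Matrix.isUnit_iff_isUnit_det J).mp hJ
  have hJl : J⁻¹ * J = 1 := Matrix.nonsing_inv_mul J hdet
  have hJr : J * J⁻¹ = 1 := Matrix.mul_nonsing_inv J hdet
  have hkey : ∀ w : Fin m ⊕ Fin 1 → ℂ,
      J *ᵥ w = Sum.elim (A *ᵥ (w ∘ Sum.inl) + w (Sum.inr 0) • bv)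
        (fun _ => c ⬝ᵥ (w ∘ Sum.inl)) := by
    intro w
    rw [hJdef, Matrix.fromBlocks_mulVec]
    funext i
    cases i with
    | inl i =>
        simp [Matrix.mulVec, dotProduct, Matrix.replicateCol, mul_comm]
    | inr j =>
        simp [Matrix.mulVec, dotProduct, Matrix.replicateRow]
  -- the candidate derivative as an explicit linear equivalence
  let Lfun : (ℂ × ℂ × (Fin m → ℂ)) → (ℂ × (Fin m → ℂ) × ℂ) :=
    fun p => (p.1, A *ᵥ p.2.2 + p.1 • w2 + p.2.1 • bv, c ⬝ᵥ p.2.2)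
  let Lback : (ℂ × (Fin m → ℂ) × ℂ) → (ℂ × ℂ × (Fin m → ℂ)) :=
    fun q => (q.1, (J⁻¹ *ᵥ Sum.elim (q.2.1 - q.1 • w2) (fun _ => q.2.2)) (Sum.inr 0),
      fun i => (J⁻¹ *ᵥ Sum.elim (q.2.1 - q.1 • w2) (fun _ => q.2.2)) (Sum.inl i))
  have hleft : ∀ p, Lback (Lfun p) = p := by
    rintro ⟨ds, dt, dY⟩
    have e1 : (Sum.elim (A *ᵥ dY + ds • w2 + dt • bv - ds • w2)
        (fun _ : Fin 1 => c ⬝ᵥ dY) : Fin m ⊕ Fin 1 → ℂ)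
        = J *ᵥ Sum.elim dY (fun _ => dt) := by
      rw [hkey]
      funext i
      cases i with
      | inl i =>
          simp only [Sum.elim_inl, Sum.elim_comp_inl, Sum.elim_inr]
          have : A *ᵥ dY + ds • w2 + dt • bv - ds • w2 = A *ᵥ dY + dt • bv := by abel
          rw [this]
      | inr j => simp
    have e2 : (J⁻¹ *ᵥ (J *ᵥ Sum.elim dY (fun _ => dt)))
        = Sum.elim dY (fun _ => dt) := by
      rw [Matrix.mulVec_mulVec, hJl, Matrix.one_mulVec]
    show (ds, (J⁻¹ *ᵥ Sum.elim (A *ᵥ dY + ds • w2 + dt • bv - ds • w2)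
        (fun _ => c ⬝ᵥ dY)) (Sum.inr 0),
      fun i => (J⁻¹ *ᵥ Sum.elim (A *ᵥ dY + ds • w2 + dt • bv - ds • w2)
        (fun _ => c ⬝ᵥ dY)) (Sum.inl i)) = (ds, dt, dY)
    rw [e1, e2]
    simp
  have hright : ∀ q, Lfun (Lback q) = q := by
    rintro ⟨ds, u, v⟩
    set w : Fin m ⊕ Fin 1 → ℂ := J⁻¹ *ᵥ Sum.elim (u - ds • w2) (fun _ => v) with hw
    have e0 : J *ᵥ w = Sum.elim (u - ds • w2) (fun _ => v) := by
      rw [hw, Matrix.mulVec_mulVec, hJr, Matrix.one_mulVec]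
    rw [hkey] at e0
    have einl : A *ᵥ (w ∘ Sum.inl) + w (Sum.inr 0) • bv = u - ds • w2 := by
      funext i; exact congrFun e0 (Sum.inl i)
    have einr : c ⬝ᵥ (w ∘ Sum.inl) = v := congrFun e0 (Sum.inr 0)
    show (ds, A *ᵥ (fun i => w (Sum.inl i)) + ds • w2 + w (Sum.inr 0) • bv,
        c ⬝ᵥ (fun i => w (Sum.inl i))) = (ds, u, v)
    have : A *ᵥ (fun i => w (Sum.inl i)) + ds • w2 + w (Sum.inr 0) • bv
        = (A *ᵥ (w ∘ Sum.inl) + w (Sum.inr 0) • bv) + ds • w2 := by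
      show A *ᵥ (w ∘ Sum.inl) + ds • w2 + w (Sum.inr 0) • bv = _
      abel
    rw [this, einl]
    have : c ⬝ᵥ (fun i => w (Sum.inl i)) = v := einr
    rw [this]
    simp
  let Dlin : (ℂ × ℂ × (Fin m → ℂ)) ≃ₗ[ℂ] (ℂ × (Fin m → ℂ) × ℂ) :=
    { toFun := Lfun
      invFun := Lback
      left_inv := hleft
      right_inv := hright
      map_add' := by
        rintro ⟨a1, a2, a3⟩ ⟨b1, b2, b3⟩
        simp only [Lfun, Prod.fst_add, Prod.snd_add, Prod.mk_add_mk, Prod.mk.injEq,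
          Matrix.mulVec_add, add_dotProduct, dotProduct_add, add_smul]
        refine ⟨?_, ?_, ?_⟩ <;> first | trivial | abel
      map_smul' := by
        rintro a ⟨b1, b2, b3⟩
        simp only [Lfun, Prod.smul_mk, smul_eq_mul, RingHom.id_apply, Prod.mk.injEq,
          Matrix.mulVec_smul, dotProduct_smul, smul_add, smul_smul]
        }
  haveI : FiniteDimensional ℂ (ℂ × ℂ × (Fin m → ℂ)) := inferInstance
  let D : (ℂ × ℂ × (Fin m → ℂ)) ≃L[ℂ] (ℂ × (Fin m → ℂ) × ℂ) := Dlin.toContinuousLinearEquiv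
  set x₀ : ℂ × ℂ × (Fin m → ℂ) := (lam, μ, y) with hx₀
  set Φ : (ℂ × ℂ × (Fin m → ℂ)) → (ℂ × (Fin m → ℂ) × ℂ) := nlPhi m B₁ B₂ B₃ c with hΦdef
  let P2 : (ℂ × ℂ × (Fin m → ℂ)) →L[ℂ] (Fin m → ℂ) :=
    (ContinuousLinearMap.snd ℂ ℂ (Fin m → ℂ)).comp (ContinuousLinearMap.snd ℂ ℂ (ℂ × (Fin m → ℂ)))
  let P1 : (ℂ × ℂ × (Fin m → ℂ)) →L[ℂ] ℂ :=
    (ContinuousLinearMap.fst ℂ ℂ (Fin m → ℂ)).comp (ContinuousLinearMap.snd ℂ ℂ (ℂ × (Fin m → ℂ)))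
  let M₁ := LinearMap.toContinuousLinearMap (Matrix.mulVecLin B₁)
  let M₂ := LinearMap.toContinuousLinearMap (Matrix.mulVecLin B₂)
  let M₃ := LinearMap.toContinuousLinearMap (Matrix.mulVecLin B₃)
  let cL : (Fin m → ℂ) →L[ℂ] ℂ := LinearMap.toContinuousLinearMap
    { toFun := fun v => c ⬝ᵥ v
      map_add' := fun a b => dotProduct_add c a b
      map_smul' := fun a v => dotProduct_smul a c v }
  -- derivative of Φ at x₀
  have hfst : HasFDerivAt (fun p : ℂ × ℂ × (Fin m → ℂ) => p.1)
      (ContinuousLinearMap.fst ℂ ℂ (ℂ × (Fin m → ℂ))) x₀ := hasFDerivAt_fst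
  have hP2 : HasFDerivAt (fun p : ℂ × ℂ × (Fin m → ℂ) => p.2.2) P2 x₀ := P2.hasFDerivAt
  have hP1 : HasFDerivAt (fun p : ℂ × ℂ × (Fin m → ℂ) => p.2.1) P1 x₀ := P1.hasFDerivAt
  have h2a : HasFDerivAt (fun p : ℂ × ℂ × (Fin m → ℂ) => B₁ *ᵥ p.2.2) (M₁.comp P2) x₀ :=
    (M₁.hasFDerivAt.comp x₀ hP2 :)
  have h2b' : HasFDerivAt (fun p : ℂ × ℂ × (Fin m → ℂ) => B₂ *ᵥ p.2.2) (M₂.comp P2) x₀ :=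
    (M₂.hasFDerivAt.comp x₀ hP2 :)
  have h2c' : HasFDerivAt (fun p : ℂ × ℂ × (Fin m → ℂ) => B₃ *ᵥ p.2.2) (M₃.comp P2) x₀ :=
    (M₃.hasFDerivAt.comp x₀ hP2 :)
  have h3 : HasFDerivAt (fun p : ℂ × ℂ × (Fin m → ℂ) => c ⬝ᵥ p.2.2) (cL.comp P2) x₀ :=
    (cL.hasFDerivAt.comp x₀ hP2 :)
  have h2b := hfst.smul h2b'
  have h2c := hP1.smul h2c'
  let D₀ : (ℂ × ℂ × (Fin m → ℂ)) →L[ℂ] (ℂ × (Fin m → ℂ) × ℂ) :=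
    (ContinuousLinearMap.fst ℂ ℂ (ℂ × (Fin m → ℂ))).prod
      ((M₁.comp P2 + (x₀.1 • M₂.comp P2 +
        (ContinuousLinearMap.fst ℂ ℂ (ℂ × (Fin m → ℂ))).smulRight (B₂ *ᵥ x₀.2.2)) +
        (x₀.2.1 • M₃.comp P2 + P1.smulRight (B₃ *ᵥ x₀.2.2))).prod (cL.comp P2))
  have hD0 : HasFDerivAt Φ D₀ x₀ := hfst.prodMk (((h2a.add h2b).add h2c).prodMk h3)
  have hDeq : D₀ = (D : (ℂ × ℂ × (Fin m → ℂ)) →L[ℂ] (ℂ × (Fin m → ℂ) × ℂ)) := by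
    apply ContinuousLinearMap.ext
    rintro ⟨ds, dt, dY⟩
    show _ = Lfun (ds, dt, dY)
    simp only [D₀, ContinuousLinearMap.prod_apply, ContinuousLinearMap.add_apply,
      ContinuousLinearMap.coe_fst', ContinuousLinearMap.coe_comp', Function.comp_apply,
      ContinuousLinearMap.coe_snd', ContinuousLinearMap.smul_apply,
      ContinuousLinearMap.smulRight_apply, LinearMap.coe_toContinuousLinearMap',
      Matrix.mulVecLin_apply, LinearMap.coe_mk, AddHom.coe_mk, P2, P1, M₁, M₂, M₃, cL, Lfun]
    refine Prod.ext rfl (Prod.ext ?_ rfl)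
    show B₁ *ᵥ dY + (lam • (B₂ *ᵥ dY) + ds • (B₂ *ᵥ y)) + (μ • (B₃ *ᵥ dY) + dt • (B₃ *ᵥ y))
        = A *ᵥ dY + ds • w2 + dt • bv
    rw [hAdef, hw2, hbv, Matrix.add_mulVec, Matrix.add_mulVec,
      Matrix.smul_mulVec, Matrix.smul_mulVec]
    abel
  rw [hDeq] at hD0
  -- Φ is analytic at x₀
  have hΦa : AnalyticAt ℂ Φ x₀ := by
    have a2 : AnalyticAt ℂ (fun p : ℂ × ℂ × (Fin m → ℂ) => p.2.2) x₀ := P2.analyticAt x₀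
    have a1 : AnalyticAt ℂ (fun p : ℂ × ℂ × (Fin m → ℂ) => p.2.1) x₀ := P1.analyticAt x₀
    have aB : ∀ M : Matrix (Fin m) (Fin m) ℂ,
        AnalyticAt ℂ (fun p : ℂ × ℂ × (Fin m → ℂ) => M *ᵥ p.2.2) x₀ := by
      intro M
      exact ((LinearMap.toContinuousLinearMap (Matrix.mulVecLin M)).analyticAt
        (P2 x₀)).comp (P2.analyticAt x₀)
    exact analyticAt_fst.prod
      ((((aB B₁).add ((analyticAt_fst).smul (aB B₂))).add (a1.smul (aB B₃))).prod
        ((cL.analyticAt (P2 x₀)).comp (P2.analyticAt x₀)))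
  obtain ⟨ps, hps⟩ := hΦa
  have hstr0 : HasStrictFDerivAt Φ
      (continuousMultilinearCurryFin1 ℂ (ℂ × ℂ × (Fin m → ℂ)) (ℂ × (Fin m → ℂ) × ℂ) (ps 1)) x₀ :=
    hps.hasStrictFDerivAt
  have hps1 : continuousMultilinearCurryFin1 ℂ (ℂ × ℂ × (Fin m → ℂ)) (ℂ × (Fin m → ℂ) × ℂ) (ps 1)
      = (D : (ℂ × ℂ × (Fin m → ℂ)) →L[ℂ] (ℂ × (Fin m → ℂ) × ℂ)) :=
    hstr0.hasFDerivAt.unique hD0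
  have hstr : HasStrictFDerivAt Φ
      ((D : (ℂ × ℂ × (Fin m → ℂ)) ≃L[ℂ] (ℂ × (Fin m → ℂ) × ℂ)) :
        (ℂ × ℂ × (Fin m → ℂ)) →L[ℂ] (ℂ × (Fin m → ℂ) × ℂ)) x₀ := hps1 ▸ hstr0
  have hp1 : ps 1 = (continuousMultilinearCurryFin1 ℂ (ℂ × ℂ × (Fin m → ℂ))
      (ℂ × (Fin m → ℂ) × ℂ)).symm
      (D : (ℂ × ℂ × (Fin m → ℂ)) →L[ℂ] (ℂ × (Fin m → ℂ) × ℂ)) := by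
    exact ((continuousMultilinearCurryFin1 ℂ (ℂ × ℂ × (Fin m → ℂ))
      (ℂ × (Fin m → ℂ) × ℂ)).eq_symm_apply).mpr hps1
  let f : OpenPartialHomeomorph (ℂ × ℂ × (Fin m → ℂ)) (ℂ × (Fin m → ℂ) × ℂ) :=
    hstr.toOpenPartialHomeomorph Φ
  have hsrc : x₀ ∈ f.source := hstr.mem_toOpenPartialHomeomorph_source
  have hcoe : ⇑f = Φ := hstr.toOpenPartialHomeomorph_coe
  have hΦx₀ : Φ x₀ = ((lam, 0, 1) : ℂ × (Fin m → ℂ) × ℂ) := by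
    have h0 : B₁ *ᵥ y + lam • (B₂ *ᵥ y) + μ • (B₃ *ᵥ y) = 0 := by
      rw [← hB, hAdef, Matrix.add_mulVec, Matrix.add_mulVec,
        Matrix.smul_mulVec, Matrix.smul_mulVec]
    show ((lam, B₁ *ᵥ y + lam • (B₂ *ᵥ y) + μ • (B₃ *ᵥ y), c ⬝ᵥ y) : ℂ × (Fin m → ℂ) × ℂ)
      = (lam, 0, 1)
    rw [h0, hc]
  have hfx₀ : f x₀ = ((lam, 0, 1) : ℂ × (Fin m → ℂ) × ℂ) := by
    rw [show (f x₀ : ℂ × (Fin m → ℂ) × ℂ) = Φ x₀ from congrFun hcoe x₀, hΦx₀]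
  have hpsf : HasFPowerSeriesAt (⇑f) ps x₀ := by rw [hcoe]; exact hps
  have hsymmps := f.hasFPowerSeriesAt_symm hsrc hpsf hp1
  rw [hfx₀] at hsymmps
  have hsymma : AnalyticAt ℂ (⇑f.symm) ((lam, 0, 1) : ℂ × (Fin m → ℂ) × ℂ) := ⟨_, hsymmps⟩
  have hι : AnalyticAt ℂ (fun s : ℂ => ((s, 0, 1) : ℂ × (Fin m → ℂ) × ℂ)) lam :=
    (analyticAt_id).prod (analyticAt_const.prod analyticAt_const)
  have hcomp : AnalyticAt ℂ (fun s : ℂ => f.symm (s, 0, 1)) lam := by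
    exact AnalyticAt.comp (g := ⇑f.symm)
      (f := fun s : ℂ => ((s, 0, 1) : ℂ × (Fin m → ℂ) × ℂ)) (x := lam) hsymma hι
  have hval : f.symm ((lam, 0, 1) : ℂ × (Fin m → ℂ) × ℂ) = x₀ := by
    rw [← hfx₀]; exact f.left_inv hsrc
  let Q1 : (ℂ × ℂ × (Fin m → ℂ)) →L[ℂ] ℂ :=
    (ContinuousLinearMap.fst ℂ ℂ (Fin m → ℂ)).comp (ContinuousLinearMap.snd ℂ ℂ (ℂ × (Fin m → ℂ)))
  let Q2 : (ℂ × ℂ × (Fin m → ℂ)) →L[ℂ] (Fin m → ℂ) :=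
    (ContinuousLinearMap.snd ℂ ℂ (Fin m → ℂ)).comp (ContinuousLinearMap.snd ℂ ℂ (ℂ × (Fin m → ℂ)))
  refine ⟨fun s => (f.symm (s, 0, 1)).2.1, fun s => (f.symm (s, 0, 1)).2.2, ?_, ?_, ?_, ?_, ?_⟩
  · exact (Q1.analyticAt _).comp hcomp
  · exact (Q2.analyticAt _).comp hcomp
  · show (f.symm ((lam, 0, 1) : ℂ × (Fin m → ℂ) × ℂ)).2.1 = μ
    rw [hval]
  · show (f.symm ((lam, 0, 1) : ℂ × (Fin m → ℂ) × ℂ)).2.2 = y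
    rw [hval]
  · have h1 : ((lam, 0, 1) : ℂ × (Fin m → ℂ) × ℂ) ∈ f.target := by
      rw [← hfx₀]; exact f.map_source hsrc
    have hmem : ∀ᶠ s in nhds lam, ((s, 0, 1) : ℂ × (Fin m → ℂ) × ℂ) ∈ f.target :=
      hι.continuousAt.preimage_mem_nhds (f.open_target.mem_nhds h1)
    filter_upwards [hmem] with s hs
    have hr : Φ (f.symm (s, 0, 1)) = ((s, 0, 1) : ℂ × (Fin m → ℂ) × ℂ) := by
      rw [← congrFun hcoe (f.symm (s, 0, 1))]; exact f.right_inv hs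
    set q := f.symm ((s, 0, 1) : ℂ × (Fin m → ℂ) × ℂ) with hq
    have h1' : q.1 = s := congrArg Prod.fst hr
    have hrs := congrArg Prod.snd hr
    have h2 : B₁ *ᵥ q.2.2 + q.1 • (B₂ *ᵥ q.2.2) + q.2.1 • (B₃ *ᵥ q.2.2) = 0 :=
      congrArg Prod.fst hrs
    have h3 : c ⬝ᵥ q.2.2 = 1 := congrArg Prod.snd hrs
    constructor
    · rw [Matrix.add_mulVec, Matrix.add_mulVec, Matrix.smul_mulVec,
        Matrix.smul_mulVec, ← h1']
      exact h2
    · exact h3
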